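/- Let d ≥ 1, θ > 0, and let k : ℝᵈ → ℝᵈ be an integrable vector field with ∫_{B_R} k(y) dy = 0 for all R > 0, ∫ |y| |k(y)| dy =: A < ∞, and |k(y)| ≤ B |y|^(-(θ+d+1)) for all y ≠ 0. Suppose v ∈ L¹(ℝᵈ) is Lipschitz with |∇v(x)| ≤ L(1+|x|)^(-(θ+1)) a.e. Then there exists C > 0 (independent of v, k) such that |∫ k(y) v(x-y) dy| ≤ C (A·L + B·‖v‖_{L¹}) |x|^(-(θ+1)) for all |x| ≥ 1. -/

import Mathlib

open MeasureTheory Set Metric Filter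

section Aux

variable {d : ℕ}

local notation "E" => EuclideanSpace ℝ (Fin d)

/-- A Lipschitz integrable function is (globally) bounded. -/
lemma lip_int_bound {v : E → ℝ} {K : NNReal} (hlip : LipschitzWith K v)
    (hint : Integrable v) : ∃ M : ℝ, 0 ≤ M ∧ ∀ w, |v w| ≤ M := by
  set c : ℝ := (volume (ball (0 : E) 1)).toReal with hcdef
  have hc : 0 < c :=
    ENNReal.toReal_pos (measure_ball_pos _ _ one_pos).ne' measure_ball_lt_top.ne
  refine ⟨(K : ℝ) + (∫ y, |v y|) / c, by positivity, fun w => ?_⟩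
  have hball : ∀ s ∈ ball w 1, |v w| ≤ |v s| + (K : ℝ) := by
    intro s hs
    have h1 : |v w| - |v s| ≤ |v w - v s| := abs_sub_abs_le_abs_sub _ _
    have h2 : |v w - v s| ≤ (K : ℝ) * dist w s := by
      have := hlip.dist_le_mul w s
      rwa [Real.dist_eq] at this
    have h3 : dist w s ≤ 1 := by
      rw [mem_ball, dist_comm] at hs; exact hs.le
    nlinarith [K.coe_nonneg]
  have hvol : volume (ball w 1) = volume (ball (0 : E) 1) :=
    Measure.addHaar_ball_center volume w 1
  have hIl : IntegrableOn (fun _ : E => |v w|) (ball w 1) volume :=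
    integrableOn_const measure_ball_lt_top.ne
  have hIr : IntegrableOn (fun s => |v s| + (K : ℝ)) (ball w 1) volume :=
    (hint.abs.integrableOn).add (integrableOn_const measure_ball_lt_top.ne)
  have hmono := setIntegral_mono_on hIl hIr measurableSet_ball hball
  have hL : ∫ _ in ball w 1, |v w| = c * |v w| := by
    rw [setIntegral_const, measureReal_def, hvol, smul_eq_mul, hcdef]
  have hR : ∫ s in ball w 1, (|v s| + (K : ℝ)) ≤ (∫ y, |v y|) + c * (K : ℝ) := by
    rw [integral_add (hint.abs.integrableOn) (integrableOn_const measure_ball_lt_top.ne)]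
    have h1 : ∫ s in ball w 1, |v s| ≤ ∫ y, |v y| :=
      setIntegral_le_integral hint.abs (Eventually.of_forall fun y => abs_nonneg _)
    have h2 : ∫ _ in ball w 1, (K : ℝ) = c * (K : ℝ) := by
      rw [setIntegral_const, measureReal_def, hvol, smul_eq_mul, hcdef]
    linarith
  rw [hL] at hmono
  have h3 : c * |v w| ≤ (∫ y, |v y|) + c * (K : ℝ) := le_trans hmono hR
  have h5 : |v w| ≤ ((∫ y, |v y|) + c * (K : ℝ)) / c := by
    rw [le_div_iff₀ hc]; linarith
  calc |v w| ≤ ((∫ y, |v y|) + c * (K : ℝ)) / c := h5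
    _ = (K : ℝ) + (∫ y, |v y|) / c := by field_simp; ring

/-- Average of a Lipschitz function over a small ball is close to the value. -/
lemma avg_close {v : E → ℝ} {K : NNReal} (hlip : LipschitzWith K v)
    {ε : ℝ} (hε : 0 < ε) (w : E) :
    |((volume (ball (0 : E) ε)).toReal)⁻¹ * (∫ s in ball (0 : E) ε, v (w - s)) - v w|
      ≤ (K : ℝ) * ε := by
  set c : ℝ := (volume (ball (0 : E) ε)).toReal with hcdef
  have hc : 0 < c :=
    ENNReal.toReal_pos (measure_ball_pos _ _ hε).ne' measure_ball_lt_top.ne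
  have hint1 : IntegrableOn (fun s => v (w - s)) (ball (0 : E) ε) volume :=
    (((hlip.continuous.comp (continuous_const.sub continuous_id)).continuousOn).integrableOn_compact
      (isCompact_closedBall _ _)).mono_set ball_subset_closedBall
  have key : |∫ s in ball (0 : E) ε, (v (w - s) - v w)| ≤ ((K : ℝ) * ε) * c := by
    have h := norm_setIntegral_le_of_norm_le_const (μ := volume) (s := ball (0 : E) ε)
      (f := fun s => v (w - s) - v w) (C := (K : ℝ) * ε) measure_ball_lt_top
      (fun s hs => by
        have h1 : |v (w - s) - v w| ≤ (K : ℝ) * dist (w - s) w := by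
          have := hlip.dist_le_mul (w - s) w
          rwa [Real.dist_eq] at this
        have h2 : dist (w - s) w ≤ ε := by
          rw [dist_eq_norm]
          simp only [sub_sub_cancel_left, norm_neg]
          exact (mem_ball_zero_iff.1 hs).le
        calc ‖v (w - s) - v w‖ = |v (w - s) - v w| := rfl
          _ ≤ (K : ℝ) * dist (w - s) w := h1
          _ ≤ (K : ℝ) * ε := by nlinarith [K.coe_nonneg])
    exact h
  have hsub : ∫ s in ball (0 : E) ε, (v (w - s) - v w)
      = (∫ s in ball (0 : E) ε, v (w - s)) - c * v w := by
    rw [integral_sub hint1 (integrableOn_const measure_ball_lt_top.ne),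
      setIntegral_const, measureReal_def, smul_eq_mul]
  have heq : c⁻¹ * (∫ s in ball (0 : E) ε, v (w - s)) - v w
      = c⁻¹ * ((∫ s in ball (0 : E) ε, v (w - s)) - c * v w) := by
    field_simp
  rw [heq, ← hsub, abs_mul, abs_inv, abs_of_pos hc]
  calc c⁻¹ * |∫ s in ball (0 : E) ε, (v (w - s) - v w)|
      ≤ c⁻¹ * (((K : ℝ) * ε) * c) := by
        exact mul_le_mul_of_nonneg_left key (inv_nonneg.2 hc.le)
    _ = (K : ℝ) * ε := by field_simp


/-- Mollified mean value inequality with an a.e. derivative bound. -/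
lemma mvt_eps {v : E → ℝ} {K : NNReal} (hlip : LipschitzWith K v)
    {φ : E → ℝ} (hφ : ∀ᵐ w : E, ‖fderiv ℝ v w‖ ≤ φ w)
    {M ε : ℝ} (hM : 0 ≤ M) (hε : 0 < ε) (a u : E)
    (hbd : ∀ t ∈ Icc (0 : ℝ) 1, ∀ s ∈ ball (0 : E) ε, φ (a + t • u - s) ≤ M) :
    |v (a + u) - v a| ≤ M * ‖u‖ + 2 * (K : ℝ) * ε := by
  classical
  set c : ℝ := (volume (ball (0 : E) ε)).toReal with hcdef
  have hc : 0 < c :=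
    ENNReal.toReal_pos (measure_ball_pos _ _ hε).ne' measure_ball_lt_top.ne
  set F : ℝ → ℝ := fun t => c⁻¹ * ∫ s in ball (0 : E) ε, v (a + t • u - s) with hF
  set G : ℝ → ℝ := fun t => c⁻¹ * ∫ s in ball (0 : E) ε, (fderiv ℝ v (a + t • u - s)) u with hG
  have hcont : Continuous v := hlip.continuous
  have hIv : ∀ t : ℝ, IntegrableOn (fun s => v (a + t • u - s)) (ball (0 : E) ε) volume := by
    intro t
    exact (((hcont.comp (continuous_const.sub continuous_id)).continuousOn).integrableOn_compact
      (isCompact_closedBall _ _)).mono_set ball_subset_closedBall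
  -- differentiability and bound transported along s ↦ a + t•u - s
  have hae : ∀ t : ℝ, ∀ᵐ s : E,
      DifferentiableAt ℝ v (a + t • u - s) ∧ ‖fderiv ℝ v (a + t • u - s)‖ ≤ φ (a + t • u - s) := by
    intro t
    exact (Measure.measurePreserving_sub_left volume
      (a + t • u)).quasiMeasurePreserving.ae (hlip.ae_differentiableAt.and hφ)
  -- Step A : derivative of the mollified function
  have hderiv : ∀ t : ℝ, HasDerivAt F (G t) t := by
    intro t
    rw [hasDerivAt_iff_tendsto_slope]
    have hDCT : Tendsto
        (fun t' => ∫ s in ball (0 : E) ε,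
          ((v (a + t' • u - s) - v (a + t • u - s)) / (t' - t)))
        (nhdsWithin t {t}ᶜ)
        (nhds (∫ s in ball (0 : E) ε, (fderiv ℝ v (a + t • u - s)) u)) := by
      apply tendsto_integral_filter_of_dominated_convergence
        (fun _ : E => (K : ℝ) * ‖u‖)
      · exact Eventually.of_forall fun t' =>
          ((((hcont.comp (continuous_const.sub continuous_id)).sub
            (hcont.comp (continuous_const.sub continuous_id))).div_const
            _).aestronglyMeasurable.restrict)
      · filter_upwards [self_mem_nhdsWithin] with t' ht'
        refine Eventually.of_forall fun s => ?_
        have htne : t' - t ≠ 0 := sub_ne_zero.2 ht'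
        have h1 : |v (a + t' • u - s) - v (a + t • u - s)|
            ≤ (K : ℝ) * ‖(t' - t) • u‖ := by
          have := hlip.dist_le_mul (a + t' • u - s) (a + t • u - s)
          rw [Real.dist_eq, dist_eq_norm] at this
          have heq : (a + t' • u - s) - (a + t • u - s) = (t' - t) • u := by
            rw [sub_smul]; abel
          rwa [heq] at this
        rw [Real.norm_eq_abs, abs_div]
        rw [div_le_iff₀ (by positivity : (0:ℝ) < |t' - t|)]
        calc |v (a + t' • u - s) - v (a + t • u - s)|
            ≤ (K : ℝ) * ‖(t' - t) • u‖ := h1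
          _ = (K : ℝ) * ‖u‖ * |t' - t| := by
              rw [norm_smul, Real.norm_eq_abs]; ring
      · exact integrableOn_const measure_ball_lt_top.ne
      · refine ae_restrict_of_ae ?_
        filter_upwards [hae t] with s hs
        set p : E := a + t • u - s with hp
        have hg : HasDerivAt (fun τ : ℝ => v (a + τ • u - s)) ((fderiv ℝ v p) u) t := by
          have hlin : HasDerivAt (fun τ : ℝ => a + τ • u - s) u t := by
            have h1 : HasDerivAt (fun τ : ℝ => τ • u) ((1 : ℝ) • u) t :=
              (hasDerivAt_id t).smul_const u
            simpa using (h1.const_add a).sub_const s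
          exact (hs.1.hasFDerivAt).comp_hasDerivAt t hlin
        have := hasDerivAt_iff_tendsto_slope.1 hg
        refine this.congr fun t' => ?_
        rw [slope_def_field]
    have hDCT2 := hDCT.const_mul c⁻¹
    refine hDCT2.congr' ?_
    filter_upwards [self_mem_nhdsWithin] with t' ht'
    have htne : t' - t ≠ 0 := sub_ne_zero.2 ht'
    rw [slope_def_field, hF]
    simp only
    rw [integral_div, integral_sub (hIv t') (hIv t)]
    ring
  -- Step B : bound the derivative on [0,1]
  have hGbd : ∀ t ∈ Icc (0 : ℝ) 1, ‖G t‖ ≤ M * ‖u‖ := by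
    intro t ht
    have hkey : ‖∫ s in ball (0 : E) ε, (fderiv ℝ v (a + t • u - s)) u‖
        ≤ (M * ‖u‖) * c := by
      have hb : ∀ᵐ s ∂(volume.restrict (ball (0 : E) ε)),
          ‖(fderiv ℝ v (a + t • u - s)) u‖ ≤ M * ‖u‖ := by
        refine (ae_restrict_iff' measurableSet_ball).2 ?_
        filter_upwards [hae t] with s hs hsball
        calc ‖(fderiv ℝ v (a + t • u - s)) u‖
            ≤ ‖fderiv ℝ v (a + t • u - s)‖ * ‖u‖ := (fderiv ℝ v _).le_opNorm u
          _ ≤ φ (a + t • u - s) * ‖u‖ :=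
              mul_le_mul_of_nonneg_right hs.2 (norm_nonneg u)
          _ ≤ M * ‖u‖ :=
              mul_le_mul_of_nonneg_right (hbd t ht s hsball) (norm_nonneg u)
      have hmeas : AEStronglyMeasurable (fun s => (fderiv ℝ v (a + t • u - s)) u)
          (volume.restrict (ball (0 : E) ε)) := by
        have h1 : Measurable fun w : E => (fderiv ℝ v w) u :=
          measurable_fderiv_apply_const ℝ v u
        exact (h1.comp ((measurable_const.sub measurable_id))).aestronglyMeasurable.restrict
      have := norm_setIntegral_le_of_norm_le_const_ae (C := M * ‖u‖)
        (μ := volume) (s := ball (0 : E) ε) measure_ball_lt_top hb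
      exact this
    rw [hG]
    simp only
    rw [norm_mul, Real.norm_eq_abs, Real.norm_eq_abs, abs_inv, abs_of_pos hc]
    calc c⁻¹ * |∫ s in ball (0 : E) ε, (fderiv ℝ v (a + t • u - s)) u|
        ≤ c⁻¹ * ((M * ‖u‖) * c) :=
          mul_le_mul_of_nonneg_left (by simpa [Real.norm_eq_abs] using hkey)
            (inv_nonneg.2 hc.le)
      _ = M * ‖u‖ := by field_simp
  -- Step C : mean value inequality for F
  have hFmv : |F 1 - F 0| ≤ M * ‖u‖ := by
    have := Convex.norm_image_sub_le_of_norm_hasDerivWithin_le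
      (f := F) (f' := G) (s := Icc (0 : ℝ) 1)
      (fun t ht => (hderiv t).hasDerivWithinAt)
      (fun t ht => hGbd t ht) (convex_Icc 0 1)
      (Set.left_mem_Icc.2 zero_le_one) (Set.right_mem_Icc.2 zero_le_one)
    simpa [Real.norm_eq_abs] using this
  -- Step D : F at endpoints is close to v
  have hF0 : |F 0 - v a| ≤ (K : ℝ) * ε := by
    have := avg_close hlip hε a
    have h0 : F 0 = c⁻¹ * ∫ s in ball (0 : E) ε, v (a - s) := by
      rw [hF]; simp
    rw [h0]; exact this
  have hF1 : |F 1 - v (a + u)| ≤ (K : ℝ) * ε := by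
    have := avg_close hlip hε (a + u)
    have h1 : F 1 = c⁻¹ * ∫ s in ball (0 : E) ε, v (a + u - s) := by
      rw [hF]; simp
    rw [h1]; exact this
  calc |v (a + u) - v a|
      = |(v (a + u) - F 1) + (F 1 - F 0) + (F 0 - v a)| := by ring_nf
    _ ≤ |v (a + u) - F 1| + |F 1 - F 0| + |F 0 - v a| := by
        exact (abs_add_le _ _).trans (add_le_add_left (abs_add_le _ _) _)
    _ ≤ (K : ℝ) * ε + (M * ‖u‖) + (K : ℝ) * ε := by
        rw [abs_sub_comm (v (a + u)) (F 1)]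
        exact add_le_add (add_le_add hF1 hFmv) hF0
    _ = M * ‖u‖ + 2 * (K : ℝ) * ε := by ring

/-- Decay version of the mean value inequality. -/
lemma mvt_decay {v : E → ℝ} {K : NNReal} (hlip : LipschitzWith K v)
    {L θ : ℝ} (hL : 0 ≤ L) (hθ1 : 0 ≤ θ + 1)
    (hφ : ∀ᵐ w : E, ‖fderiv ℝ v w‖ ≤ L * (1 + ‖w‖) ^ (-(θ + 1)))
    {r : ℝ} (hr : 0 < r) (a u : E)
    (hseg : ∀ t ∈ Icc (0 : ℝ) 1, r ≤ ‖a + t • u‖) :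
    |v (a + u) - v a| ≤ L * (1 + r) ^ (-(θ + 1)) * ‖u‖ := by
  have key : ∀ ε ∈ Ioo (0 : ℝ) r,
      |v (a + u) - v a| ≤ L * (1 + (r - ε)) ^ (-(θ + 1)) * ‖u‖ + 2 * (K : ℝ) * ε := by
    intro ε hε
    have hrε : 0 < r - ε := by linarith [hε.2]
    have hM : 0 ≤ L * (1 + (r - ε)) ^ (-(θ + 1)) := by positivity
    have hbd : ∀ t ∈ Icc (0 : ℝ) 1, ∀ s ∈ ball (0 : E) ε,
        L * (1 + ‖a + t • u - s‖) ^ (-(θ + 1)) ≤ L * (1 + (r - ε)) ^ (-(θ + 1)) := by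
      intro t ht s hs
      have h2 : ‖s‖ < ε := mem_ball_zero_iff.1 hs
      have h1 : r - ε ≤ ‖a + t • u - s‖ := by
        have h3 := norm_sub_norm_le (a + t • u) s
        have h4 := hseg t ht
        linarith
      have h5 : (1 + ‖a + t • u - s‖) ^ (-(θ + 1)) ≤ (1 + (r - ε)) ^ (-(θ + 1)) :=
        Real.rpow_le_rpow_of_nonpos (by linarith) (by linarith) (by linarith)
      exact mul_le_mul_of_nonneg_left h5 hL
    have := mvt_eps hlip hφ hM hε.1 a u hbd
    calc |v (a + u) - v a|
        ≤ L * (1 + (r - ε)) ^ (-(θ + 1)) * ‖u‖ + 2 * (K : ℝ) * ε := this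
      _ = L * (1 + (r - ε)) ^ (-(θ + 1)) * ‖u‖ + 2 * (K : ℝ) * ε := rfl
  have hcont : ContinuousAt
      (fun ε : ℝ => L * (1 + (r - ε)) ^ (-(θ + 1)) * ‖u‖ + 2 * (K : ℝ) * ε) 0 := by
    have hb : ContinuousAt (fun ε : ℝ => 1 + (r - ε)) 0 := by fun_prop
    have hne : (1 + (r - (0 : ℝ))) ≠ 0 := by
      have : (0 : ℝ) < 1 + (r - 0) := by linarith
      exact this.ne'
    have hc : ContinuousAt (fun ε : ℝ => (1 + (r - ε)) ^ (-(θ + 1))) 0 :=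
      hb.rpow_const (Or.inl hne)
    exact ((continuousAt_const.mul hc).mul continuousAt_const).add
      (continuousAt_const.mul continuousAt_id)
  have htend : Tendsto
      (fun ε : ℝ => L * (1 + (r - ε)) ^ (-(θ + 1)) * ‖u‖ + 2 * (K : ℝ) * ε)
      (nhdsWithin 0 (Ioi 0)) (nhds (L * (1 + r) ^ (-(θ + 1)) * ‖u‖)) := by
    have h0 : L * (1 + (r - (0:ℝ))) ^ (-(θ + 1)) * ‖u‖ + 2 * (K : ℝ) * 0
        = L * (1 + r) ^ (-(θ + 1)) * ‖u‖ := by norm_num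
    have h2 : Tendsto (fun ε : ℝ => L * (1 + (r - ε)) ^ (-(θ + 1)) * ‖u‖ + 2 * (K : ℝ) * ε)
        (nhdsWithin 0 (Ioi 0))
        (nhds (L * (1 + (r - (0:ℝ))) ^ (-(θ + 1)) * ‖u‖ + 2 * (K : ℝ) * 0)) :=
      hcont.tendsto.mono_left nhdsWithin_le_nhds
    rwa [h0] at h2
  exact ge_of_tendsto htend
    (eventually_of_mem (Ioo_mem_nhdsGT_of_mem ⟨le_refl 0, hr⟩) key)

end Aux

theorem cancellation_kernel_estimate
    (d : ℕ) (hd : 1 ≤ d) (θ : ℝ) (hθ : 0 < θ) :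
    ∃ C : ℝ, 0 < C ∧
      ∀ (k : EuclideanSpace ℝ (Fin d) → EuclideanSpace ℝ (Fin d))
        (v : EuclideanSpace ℝ (Fin d) → ℝ) (A B L : ℝ),
        Integrable k →
        (∀ R : ℝ, 0 < R → (∫ y in Metric.ball (0 : EuclideanSpace ℝ (Fin d)) R, k y) = 0) →
        Integrable (fun y => ‖y‖ * ‖k y‖) →
        A = (∫ y, ‖y‖ * ‖k y‖) →
        (∀ y : EuclideanSpace ℝ (Fin d), y ≠ 0 → ‖k y‖ ≤ B * ‖y‖ ^ (-(θ + d + 1))) →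
        Integrable v →
        (∃ Lip : NNReal, LipschitzWith Lip v) →
        (∀ᵐ x : EuclideanSpace ℝ (Fin d), ‖fderiv ℝ v x‖ ≤ L * (1 + ‖x‖) ^ (-(θ + 1))) →
        ∀ x : EuclideanSpace ℝ (Fin d), 1 ≤ ‖x‖ →
          ‖∫ y, v (x - y) • k y‖ ≤ C * (A * L + B * (∫ y, |v y|)) * ‖x‖ ^ (-(θ + 1)) := by
  refine ⟨(2 : ℝ) ^ (θ + (d : ℝ) + 1), Real.rpow_pos_of_pos two_pos _, ?_⟩
  intro k v A B L hk hcancel hA_int hA hB hv_int hv_lip hφ x hx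
  obtain ⟨K, hlip⟩ := hv_lip
  set C : ℝ := (2 : ℝ) ^ (θ + (d : ℝ) + 1) with hCdef
  have hx0 : (0 : ℝ) < ‖x‖ := lt_of_lt_of_le one_pos hx
  set R : ℝ := ‖x‖ / 2 with hRdef
  have hR : 0 < R := by positivity
  -- nonnegativity of L
  have hLnn : 0 ≤ L := by
    haveI hne : (ae (volume : Measure (EuclideanSpace ℝ (Fin d)))).NeBot := by
      refine ae_neBot.2 fun h0 => ?_
      have h1 := measure_ball_pos (volume : Measure (EuclideanSpace ℝ (Fin d)))
        (0 : EuclideanSpace ℝ (Fin d)) one_pos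
      rw [h0] at h1; simp at h1
    obtain ⟨w, hw⟩ := hφ.exists
    have hpos : 0 < (1 + ‖w‖) ^ (-(θ + 1)) :=
      Real.rpow_pos_of_pos (by positivity) _
    nlinarith [norm_nonneg (fderiv ℝ v w)]
  -- nonnegativity of B
  have hBnn : 0 ≤ B := by
    set y₀ : EuclideanSpace ℝ (Fin d) :=
      EuclideanSpace.single (⟨0, hd⟩ : Fin d) (1 : ℝ) with hy₀def
    have hy₀ : ‖y₀‖ = 1 := by
      rw [hy₀def, EuclideanSpace.norm_single]; norm_num
    have hy₀ne : y₀ ≠ 0 := by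
      intro h; rw [h] at hy₀; simp at hy₀
    have h1 := hB y₀ hy₀ne
    rw [hy₀, Real.one_rpow] at h1
    nlinarith [norm_nonneg (k y₀)]
  have hAnn : 0 ≤ A :=
    hA ▸ integral_nonneg fun y => mul_nonneg (norm_nonneg _) (norm_nonneg _)
  have hInn : 0 ≤ ∫ y, |v y| := integral_nonneg fun y => abs_nonneg _
  -- boundedness of v
  obtain ⟨M₀, hM₀, hM₀v⟩ := lip_int_bound hlip hv_int
  -- integrability of the full integrand
  have hmeas_f : AEStronglyMeasurable (fun y : EuclideanSpace ℝ (Fin d) => v (x - y) • k y)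
      volume :=
    ((hlip.continuous.comp
      (continuous_const.sub continuous_id)).aestronglyMeasurable).smul hk.aestronglyMeasurable
  have hf_int : Integrable (fun y : EuclideanSpace ℝ (Fin d) => v (x - y) • k y) := by
    refine (hk.norm.const_mul M₀).mono' hmeas_f (Eventually.of_forall fun y => ?_)
    rw [norm_smul, Real.norm_eq_abs]
    exact mul_le_mul_of_nonneg_right (hM₀v _) (norm_nonneg _)
  set S : Set (EuclideanSpace ℝ (Fin d)) := ball (0 : EuclideanSpace ℝ (Fin d)) R with hSdef
  have hks : Integrable (fun y : EuclideanSpace ℝ (Fin d) => v x • k y) := hk.smul (v x)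
  have hg_int : IntegrableOn
      (fun y : EuclideanSpace ℝ (Fin d) => (v (x - y) - v x) • k y) S := by
    have : (fun y : EuclideanSpace ℝ (Fin d) => (v (x - y) - v x) • k y)
        = fun y => v (x - y) • k y - v x • k y := by
      funext y; rw [sub_smul]
    rw [this]
    exact hf_int.integrableOn.sub hks.integrableOn
  -- split the integral
  have hsplit : (∫ y, v (x - y) • k y)
      = (∫ y in S, v (x - y) • k y) + ∫ y in Sᶜ, v (x - y) • k y :=
    (integral_add_compl measurableSet_ball hf_int).symm
  -- cancellation in the near field
  have hnear_eq : (∫ y in S, v (x - y) • k y)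
      = ∫ y in S, (v (x - y) - v x) • k y := by
    have h1 : (∫ y in S, (v (x - y) - v x) • k y)
        = (∫ y in S, v (x - y) • k y) - ∫ y in S, v x • k y := by
      simp_rw [sub_smul]
      exact integral_sub hf_int.integrableOn hks.integrableOn
    have h2 : (∫ y in S, v x • k y) = v x • ∫ y in S, k y := integral_smul _ _
    rw [h1, h2, hcancel R hR, smul_zero, sub_zero]
  -- near field estimate
  have hnear : ‖∫ y in S, (v (x - y) - v x) • k y‖
      ≤ (L * (1 + R) ^ (-(θ + 1))) * A := by
    have hptwise : ∀ y ∈ S, ‖(v (x - y) - v x) • k y‖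
        ≤ (L * (1 + R) ^ (-(θ + 1))) * (‖y‖ * ‖k y‖) := by
      intro y hy
      have hyR : ‖y‖ < R := mem_ball_zero_iff.1 hy
      have hseg : ∀ t ∈ Icc (0 : ℝ) 1, R ≤ ‖x + t • (-y)‖ := by
        intro t ht
        have h3 : x + t • (-y) = x - t • y := by rw [smul_neg, ← sub_eq_add_neg]
        rw [h3]
        have h4 := norm_sub_norm_le x (t • y)
        have h2 : ‖t • y‖ ≤ ‖y‖ := by
          rw [norm_smul, Real.norm_eq_abs, abs_of_nonneg ht.1]
          nlinarith [ht.2, norm_nonneg y]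
        have h5 : ‖x‖ = 2 * R := by rw [hRdef]; ring
        linarith
      have hmv := mvt_decay hlip hLnn (by linarith) hφ hR x (-y) hseg
      have h6 : x + -y = x - y := by rw [← sub_eq_add_neg]
      rw [h6, norm_neg] at hmv
      rw [norm_smul, Real.norm_eq_abs]
      calc |v (x - y) - v x| * ‖k y‖
          ≤ (L * (1 + R) ^ (-(θ + 1)) * ‖y‖) * ‖k y‖ :=
            mul_le_mul_of_nonneg_right hmv (norm_nonneg _)
        _ = (L * (1 + R) ^ (-(θ + 1))) * (‖y‖ * ‖k y‖) := by ring
    calc ‖∫ y in S, (v (x - y) - v x) • k y‖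
        ≤ ∫ y in S, ‖(v (x - y) - v x) • k y‖ := norm_integral_le_integral_norm _
      _ ≤ ∫ y in S, (L * (1 + R) ^ (-(θ + 1))) * (‖y‖ * ‖k y‖) :=
          setIntegral_mono_on hg_int.norm
            ((hA_int.const_mul _).integrableOn) measurableSet_ball hptwise
      _ = (L * (1 + R) ^ (-(θ + 1))) * ∫ y in S, ‖y‖ * ‖k y‖ := integral_const_mul _ _
      _ ≤ (L * (1 + R) ^ (-(θ + 1))) * A := by
          refine mul_le_mul_of_nonneg_left ?_ (by positivity)
          rw [hA]
          exact setIntegral_le_integral hA_int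
            (Eventually.of_forall fun y => mul_nonneg (norm_nonneg _) (norm_nonneg _))
  -- far field estimate
  have hvk_int : Integrable (fun y : EuclideanSpace ℝ (Fin d) => |v (x - y)|) :=
    (hv_int.comp_sub_left x).abs
  have hfar : ‖∫ y in Sᶜ, v (x - y) • k y‖
      ≤ (B * R ^ (-(θ + (d : ℝ) + 1))) * ∫ y, |v y| := by
    have hptwise : ∀ y ∈ Sᶜ, ‖v (x - y) • k y‖
        ≤ (B * R ^ (-(θ + (d : ℝ) + 1))) * |v (x - y)| := by
      intro y hy
      have hyR : R ≤ ‖y‖ := le_of_not_gt fun hcon => hy (mem_ball_zero_iff.2 hcon)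
      have hy0 : y ≠ 0 := by
        intro h; rw [h, norm_zero] at hyR; linarith
      have h1 := hB y hy0
      have h2 : ‖y‖ ^ (-(θ + (d : ℝ) + 1)) ≤ R ^ (-(θ + (d : ℝ) + 1)) := by
        refine Real.rpow_le_rpow_of_nonpos hR hyR ?_
        have : (0:ℝ) ≤ (d : ℝ) := Nat.cast_nonneg d
        linarith
      rw [norm_smul, Real.norm_eq_abs]
      calc |v (x - y)| * ‖k y‖
          ≤ |v (x - y)| * (B * R ^ (-(θ + (d : ℝ) + 1))) := by
            refine mul_le_mul_of_nonneg_left (h1.trans ?_) (abs_nonneg _)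
            exact mul_le_mul_of_nonneg_left h2 hBnn
        _ = (B * R ^ (-(θ + (d : ℝ) + 1))) * |v (x - y)| := by ring
    calc ‖∫ y in Sᶜ, v (x - y) • k y‖
        ≤ ∫ y in Sᶜ, ‖v (x - y) • k y‖ := norm_integral_le_integral_norm _
      _ ≤ ∫ y in Sᶜ, (B * R ^ (-(θ + (d : ℝ) + 1))) * |v (x - y)| :=
          setIntegral_mono_on hf_int.norm.integrableOn
            ((hvk_int.const_mul _).integrableOn) measurableSet_ball.compl hptwise
      _ = (B * R ^ (-(θ + (d : ℝ) + 1))) * ∫ y in Sᶜ, |v (x - y)| := integral_const_mul _ _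
      _ ≤ (B * R ^ (-(θ + (d : ℝ) + 1))) * ∫ y, |v (x - y)| := by
          refine mul_le_mul_of_nonneg_left ?_ (by positivity)
          exact setIntegral_le_integral hvk_int (Eventually.of_forall fun y => abs_nonneg _)
      _ = (B * R ^ (-(θ + (d : ℝ) + 1))) * ∫ y, |v y| := by
          rw [integral_sub_left_eq_self (fun y => |v y|) volume x]
  -- rewriting powers of R
  have hRz : ∀ z : ℝ, R ^ (-z) = ‖x‖ ^ (-z) * 2 ^ z := by
    intro z
    rw [hRdef, div_eq_mul_inv, Real.mul_rpow hx0.le (by norm_num),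
      Real.inv_rpow (by norm_num : (0:ℝ) ≤ 2), Real.rpow_neg (by norm_num : (0:ℝ) ≤ 2), inv_inv]
  set X : ℝ := ‖x‖ ^ (-(θ + 1)) with hXdef
  have hXnn : 0 ≤ X := Real.rpow_nonneg hx0.le _
  -- constant comparisons
  have h2le : (2 : ℝ) ^ (θ + 1) ≤ C := by
    rw [hCdef]
    refine Real.rpow_le_rpow_of_exponent_le one_le_two ?_
    have : (1:ℝ) ≤ (d : ℝ) := by exact_mod_cast hd
    linarith
  have hc1 : (1 + R) ^ (-(θ + 1)) ≤ C * X := by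
    have h1 : (1 + R) ^ (-(θ + 1)) ≤ R ^ (-(θ + 1)) :=
      Real.rpow_le_rpow_of_nonpos hR (by linarith) (by linarith)
    have h2 : R ^ (-(θ + 1)) = X * 2 ^ (θ + 1) := by rw [hRz (θ + 1), hXdef]
    calc (1 + R) ^ (-(θ + 1)) ≤ X * 2 ^ (θ + 1) := h2 ▸ h1
      _ ≤ X * C := mul_le_mul_of_nonneg_left h2le hXnn
      _ = C * X := mul_comm _ _
  have hc2 : R ^ (-(θ + (d : ℝ) + 1)) ≤ C * X := by
    have h1 : R ^ (-(θ + (d : ℝ) + 1)) = ‖x‖ ^ (-(θ + (d : ℝ) + 1)) * 2 ^ (θ + (d : ℝ) + 1) :=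
      hRz _
    have h2 : ‖x‖ ^ (-(θ + (d : ℝ) + 1)) ≤ X := by
      rw [hXdef]
      refine Real.rpow_le_rpow_of_exponent_le hx ?_
      have : (0:ℝ) ≤ (d : ℝ) := Nat.cast_nonneg d
      linarith
    calc R ^ (-(θ + (d : ℝ) + 1)) = ‖x‖ ^ (-(θ + (d : ℝ) + 1)) * C := by rw [h1, hCdef]
      _ ≤ X * C := mul_le_mul_of_nonneg_right h2 (le_of_lt (Real.rpow_pos_of_pos two_pos _))
      _ = C * X := mul_comm _ _
  -- assemble
  have hCnn : 0 ≤ C := le_of_lt (Real.rpow_pos_of_pos two_pos _)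
  calc ‖∫ y, v (x - y) • k y‖
      = ‖(∫ y in S, v (x - y) • k y) + ∫ y in Sᶜ, v (x - y) • k y‖ := by rw [hsplit]
    _ ≤ ‖∫ y in S, v (x - y) • k y‖ + ‖∫ y in Sᶜ, v (x - y) • k y‖ := norm_add_le _ _
    _ ≤ (L * (1 + R) ^ (-(θ + 1))) * A + (B * R ^ (-(θ + (d : ℝ) + 1))) * ∫ y, |v y| := by
        rw [hnear_eq]
        exact add_le_add hnear hfar
    _ ≤ (L * (C * X)) * A + (B * (C * X)) * ∫ y, |v y| := by
        refine add_le_add ?_ ?_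
        · exact mul_le_mul_of_nonneg_right
            (mul_le_mul_of_nonneg_left hc1 hLnn) hAnn
        · exact mul_le_mul_of_nonneg_right
            (mul_le_mul_of_nonneg_left hc2 hBnn) hInn
    _ = C * (A * L + B * ∫ y, |v y|) * X := by ring
    _ = C * (A * L + B * ∫ y, |v y|) * ‖x‖ ^ (-(θ + 1)) := by rw [hXdef]
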